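/- The total variation distance between N(μ1, σ^2) and N(μ2, σ^2) on R equals the probability that a standard normal random variable lies in the interval [-|μ1-μ2|/(2σ), |μ1-μ2|/(2σ)]. -/

import Mathlib

open MeasureTheory ProbabilityTheory

noncomputable def tv {α : Type*} [MeasurableSpace α] (P Q : Measure α) : ℝ :=
  ⨆ A : {A : Set α // MeasurableSet A}, |(P A.1).toReal - (Q A.1).toReal|

open Real Set
open scoped NNReal ENNReal

lemma tv_comm' {α : Type*} [MeasurableSpace α] (P Q : Measure α) : tv P Q = tv Q P := by
  unfold tv
  exact iSup_congr fun A => abs_sub_comm _ _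

lemma gaussPDF_mono {μ₁ μ₂ : ℝ} {v : ℝ≥0} (hv : 0 < (v : ℝ)) {x : ℝ}
    (h : (x - μ₁) ^ 2 ≤ (x - μ₂) ^ 2) :
    gaussianPDF μ₂ v x ≤ gaussianPDF μ₁ v x := by
  unfold gaussianPDF gaussianPDFReal
  apply ENNReal.ofReal_le_ofReal
  refine mul_le_mul_of_nonneg_left ?_ (by positivity)
  apply Real.exp_le_exp.2
  apply div_le_div_of_nonneg_right (by linarith) (by positivity)

lemma gauss_mono_set {μ₁ μ₂ : ℝ} {v : ℝ≥0} (hv : v ≠ 0) {B : Set ℝ}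
    (h : ∀ x ∈ B, gaussianPDF μ₂ v x ≤ gaussianPDF μ₁ v x) :
    gaussianReal μ₂ v B ≤ gaussianReal μ₁ v B := by
  rw [gaussianReal_apply _ hv, gaussianReal_apply _ hv]
  exact setLIntegral_mono (measurable_gaussianPDF _ _) h

lemma key_add_le {α : Type*} [MeasurableSpace α] (P Q : Measure α) {S A : Set α}
    (hS : MeasurableSet S) (hA : MeasurableSet A)
    (h1 : ∀ B ⊆ Sᶜ, MeasurableSet B → P B ≤ Q B)
    (h2 : ∀ B ⊆ S, MeasurableSet B → Q B ≤ P B) :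
    P A + Q S ≤ P S + Q A := by
  have e1 : P (A \ S) ≤ Q (A \ S) :=
    h1 _ (fun x hx => hx.2) (hA.diff hS)
  have e2 : Q (S \ A) ≤ P (S \ A) :=
    h2 _ diff_subset (hS.diff hA)
  have hPA : P A = P (A ∩ S) + P (A \ S) := (measure_inter_add_diff A hS).symm
  have hQA : Q A = Q (A ∩ S) + Q (A \ S) := (measure_inter_add_diff A hS).symm
  have hPS : P S = P (S ∩ A) + P (S \ A) := (measure_inter_add_diff S hA).symm
  have hQS : Q S = Q (S ∩ A) + Q (S \ A) := (measure_inter_add_diff S hA).symm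
  rw [hPA, hQA, hPS, hQS, Set.inter_comm S A]
  calc P (A ∩ S) + P (A \ S) + (Q (A ∩ S) + Q (S \ A))
      = (P (A ∩ S) + Q (A ∩ S)) + (P (A \ S) + Q (S \ A)) := by ring
    _ ≤ (P (A ∩ S) + Q (A ∩ S)) + (Q (A \ S) + P (S \ A)) :=
        add_le_add le_rfl (add_le_add e1 e2)
    _ = P (A ∩ S) + P (S \ A) + (Q (A ∩ S) + Q (A \ S)) := by ring

lemma key_real {α : Type*} [MeasurableSpace α] (P Q : Measure α)
    [IsProbabilityMeasure P] [IsProbabilityMeasure Q] {S A : Set α}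
    (hS : MeasurableSet S) (hA : MeasurableSet A)
    (h1 : ∀ B ⊆ Sᶜ, MeasurableSet B → P B ≤ Q B)
    (h2 : ∀ B ⊆ S, MeasurableSet B → Q B ≤ P B) :
    (P A).toReal - (Q A).toReal ≤ (P S).toReal - (Q S).toReal := by
  have h := key_add_le P Q hS hA h1 h2
  have h4 : (P A).toReal + (Q S).toReal ≤ (P S).toReal + (Q A).toReal := by
    rw [← ENNReal.toReal_add (measure_ne_top _ _) (measure_ne_top _ _),
      ← ENNReal.toReal_add (measure_ne_top _ _) (measure_ne_top _ _)]
    exact ENNReal.toReal_mono (ENNReal.add_ne_top.2 ⟨measure_ne_top _ _, measure_ne_top _ _⟩) h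
  linarith

lemma helper_main (μ₁ μ₂ σ : ℝ) (hσ : 0 < σ) (hle : μ₂ ≤ μ₁) :
    tv (gaussianReal μ₁ ⟨σ ^ 2, sq_nonneg σ⟩) (gaussianReal μ₂ ⟨σ ^ 2, sq_nonneg σ⟩) =
      ((gaussianReal 0 1)
        (Set.Icc (-((μ₁ - μ₂) / (2 * σ))) ((μ₁ - μ₂) / (2 * σ)))).toReal := by
  set v : ℝ≥0 := ⟨σ ^ 2, sq_nonneg σ⟩ with hvdef
  have hvpos : 0 < (v : ℝ) := by show (0:ℝ) < σ ^ 2; positivity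
  have hv : v ≠ 0 := NNReal.coe_ne_zero.1 hvpos.ne'
  set m : ℝ := (μ₁ + μ₂) / 2 with hm
  set d : ℝ := (μ₁ - μ₂) / (2 * σ) with hd
  have hd0 : 0 ≤ d := by
    apply div_nonneg (by linarith) (by linarith)
  set P := gaussianReal μ₁ v with hP
  set Q := gaussianReal μ₂ v with hQ
  set S : Set ℝ := Ici m with hSdef
  -- density comparisons
  have h2 : ∀ B ⊆ S, MeasurableSet B → Q B ≤ P B := by
    intro B hB _
    refine gauss_mono_set hv fun x hx => gaussPDF_mono hvpos ?_
    have hxm : m ≤ x := hB hx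
    nlinarith [hxm, hle]
  have h1 : ∀ B ⊆ Sᶜ, MeasurableSet B → P B ≤ Q B := by
    intro B hB _
    refine gauss_mono_set hv fun x hx => gaussPDF_mono hvpos ?_
    have hxm : x < m := by
      have := hB hx
      simp only [hSdef, mem_compl_iff, mem_Ici, not_le] at this
      exact this
    nlinarith [hxm, hle]
  -- uniform bound
  have bound : ∀ A : Set ℝ, MeasurableSet A →
      |(P A).toReal - (Q A).toReal| ≤ (P S).toReal - (Q S).toReal := by
    intro A hA
    rw [abs_sub_le_iff]
    constructor
    · exact key_real P Q measurableSet_Ici hA h1 h2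
    · have hc := key_real P Q measurableSet_Ici hA.compl h1 h2
      have hPc : (P Aᶜ).toReal = 1 - (P A).toReal := by
        rw [prob_compl_eq_one_sub hA, ENNReal.toReal_sub_of_le prob_le_one ENNReal.one_ne_top,
          ENNReal.toReal_one]
      have hQc : (Q Aᶜ).toReal = 1 - (Q A).toReal := by
        rw [prob_compl_eq_one_sub hA, ENNReal.toReal_sub_of_le prob_le_one ENNReal.one_ne_top,
          ENNReal.toReal_one]
      rw [hPc, hQc] at hc
      linarith
  -- tv equals the half-line difference
  have htv : tv P Q = (P S).toReal - (Q S).toReal := by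
    apply le_antisymm
    · exact ciSup_le fun A => bound A.1 A.2
    · have hQS : (Q S).toReal ≤ (P S).toReal :=
        ENNReal.toReal_mono (measure_ne_top _ _) (h2 S subset_rfl measurableSet_Ici)
      have : (P S).toReal - (Q S).toReal = |(P S).toReal - (Q S).toReal| :=
        (abs_of_nonneg (by linarith)).symm
      rw [this]
      exact le_ciSup ⟨(P S).toReal - (Q S).toReal, by
        rintro x ⟨A, rfl⟩; exact bound A.1 A.2⟩ (⟨S, measurableSet_Ici⟩ : {A : Set ℝ // MeasurableSet A})
  rw [htv]
  -- compute P S and Q S via the standard normal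
  have hmap : ∀ μ : ℝ, gaussianReal μ v = (gaussianReal 0 1).map (fun x => σ * x + μ) := by
    intro μ
    have hA : (gaussianReal 0 1).map (fun x => σ * x) = gaussianReal 0 v := by
      have := gaussianReal_map_const_mul (μ := 0) (v := 1) σ
      simp [hvdef] at this; convert this using 2
      ext; simp [hvdef]; rfl
    have hB : (gaussianReal 0 v).map (· + μ) = gaussianReal μ v := by
      simpa using gaussianReal_map_add_const (μ := 0) (v := v) μ
    rw [← hB, ← hA, Measure.map_map (measurable_add_const μ) (measurable_const_mul σ)]
    rfl
  have hmeas : ∀ μ : ℝ, Measurable (fun x : ℝ => σ * x + μ) :=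
    fun μ => (measurable_id.const_mul σ).add_const μ
  have hIci : ∀ μ : ℝ, gaussianReal μ v (Ici m) = gaussianReal 0 1 (Ici ((m - μ) / σ)) := by
    intro μ
    rw [hmap μ, Measure.map_apply (hmeas μ) measurableSet_Ici]
    congr 1
    ext x
    simp only [mem_preimage, mem_Ici]
    rw [div_le_iff₀ hσ]
    constructor <;> intro <;> nlinarith [mul_comm σ x]
  have hval1 : (m - μ₁) / σ = -d := by rw [hm, hd]; field_simp; ring
  have hval2 : (m - μ₂) / σ = d := by rw [hm, hd]; field_simp; ring
  have hPS : P S = gaussianReal 0 1 (Ici (-d)) := by rw [hP, hSdef, hIci μ₁, hval1]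
  have hQS : Q S = gaussianReal 0 1 (Ici d) := by rw [hQ, hSdef, hIci μ₂, hval2]
  set N := gaussianReal 0 1 with hN
  have hsing : N {d} = 0 :=
    gaussianReal_absolutelyContinuous 0 one_ne_zero Real.volume_singleton
  have hIcid : N (Ici d) = N (Ioi d) := by
    refine le_antisymm ?_ (measure_mono Ioi_subset_Ici_self)
    calc N (Ici d) = N (Ioi d ∪ {d}) := by
          rw [show Ici d = Ioi d ∪ {d} by ext x; simp [le_iff_lt_or_eq, or_comm]]
      _ ≤ N (Ioi d) + N {d} := measure_union_le _ _
      _ = N (Ioi d) := by rw [hsing, add_zero]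
  have hdisj : Disjoint (Icc (-d) d) (Ioi d) := by
    rw [Set.disjoint_left]
    rintro x ⟨_, hx2⟩ hx3
    exact absurd hx3 (not_lt.2 hx2)
  have hsplit : N (Ici (-d)) = N (Icc (-d) d) + N (Ioi d) := by
    rw [← Set.Icc_union_Ioi_eq_Ici (by linarith : -d ≤ d),
      measure_union hdisj measurableSet_Ioi]
  rw [hPS, hQS, hIcid, hsplit, ENNReal.toReal_add (measure_ne_top _ _) (measure_ne_top _ _)]
  ring

/-- the TV distance between `N(μ₁,σ²)` and `N(μ₂,σ²)` equals the probability
that a standard normal lies in `[-|μ₁-μ₂|/(2σ), |μ₁-μ₂|/(2σ)]`. -/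
theorem tv_gaussianReal_eq_stdNormal_interval (μ₁ μ₂ σ : ℝ) (hσ : 0 < σ) :
    tv (gaussianReal μ₁ ⟨σ ^ 2, sq_nonneg σ⟩) (gaussianReal μ₂ ⟨σ ^ 2, sq_nonneg σ⟩) =
      ((gaussianReal 0 1)
        (Set.Icc (-(|μ₁ - μ₂| / (2 * σ))) (|μ₁ - μ₂| / (2 * σ)))).toReal := by
  rcases le_total μ₂ μ₁ with h | h
  · rw [abs_of_nonneg (sub_nonneg.2 h)]
    exact helper_main μ₁ μ₂ σ hσ h
  · rw [tv_comm', abs_sub_comm, abs_of_nonneg (sub_nonneg.2 h)]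
    exact helper_main μ₂ μ₁ σ hσ h
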